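/- Let X, Y be Polish spaces with probability measures μ, ν, let π ∈ Π(μ,ν) be a coupling, and let π = μ(dx) ⊗ π_x(dy) be a disintegration of π over its first marginal. If π is not absolutely continuous with respect to μ ⊗ ν, then the set of pairs (x₁, x₂) ∈ X² for which there exist Borel sets U₁, U₂ ⊆ Y with π_{x_i}(U_i) > 0 and π_{x_i}(U_{i+1}) = 0 (indices mod 2) has positive μ² = μ ⊗ μ measure. -/

import Mathlib

open MeasureTheory Set MeasurableSpace ProbabilityTheory
open scoped ENNReal NNReal

/-- Key lemma about possibly non-measurable densities: if `f` agrees with a measurable `g`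
in the sense that the lower integrals over every measurable set coincide, then the set where
`f < g` has outer measure zero. -/
lemma aux_lt_null {α : Type*} [MeasurableSpace α] (μ : Measure α) [IsFiniteMeasure μ]
    (f g : α → ℝ≥0∞) (hg : Measurable g)
    (h : ∀ A : Set α, MeasurableSet A → ∫⁻ x in A, f x ∂μ = ∫⁻ x in A, g x ∂μ) :
    μ {x | f x < g x} = 0 := by
  have hcover : {x | f x < g x} ⊆ ⋃ (p : ℚ × ℚ),
      {x | f x < Real.toNNReal p.1 ∧ ((Real.toNNReal p.1 : ℝ≥0∞) < Real.toNNReal p.2) ∧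
        (Real.toNNReal p.2 : ℝ≥0∞) < g x} := by
    intro x hx
    obtain ⟨q, _, h1, h2⟩ := ENNReal.lt_iff_exists_rat_btwn.mp hx
    obtain ⟨q', _, h3, h4⟩ := ENNReal.lt_iff_exists_rat_btwn.mp h2
    exact mem_iUnion.mpr ⟨(q, q'), h1, h3, h4⟩
  refine measure_mono_null hcover (measure_iUnion_null fun p => ?_)
  set a : ℝ≥0∞ := (Real.toNNReal p.1 : ℝ≥0∞) with ha_def
  set b : ℝ≥0∞ := (Real.toNNReal p.2 : ℝ≥0∞) with hb_def
  by_cases hab : a < b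
  swap
  · have : {x | f x < a ∧ (a < b) ∧ b < g x} = ∅ := by
      ext x; simp only [mem_setOf_eq, mem_empty_iff_false, iff_false, not_and]
      exact fun _ h' => absurd h' hab
    rw [this, measure_empty]
  set T := {x | f x < a ∧ (a < b) ∧ b < g x} with hT_def
  by_contra h0
  set A := toMeasurable μ T ∩ {x | b < g x} with hA_def
  have hAm : MeasurableSet A := (measurableSet_toMeasurable μ T).inter (hg measurableSet_Ioi)
  have hTA : T ⊆ A := fun x hx => ⟨subset_toMeasurable μ T hx, hx.2.2⟩
  have hμA : μ A = μ T := le_antisymm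
    ((measure_mono inter_subset_left).trans (measure_toMeasurable T).le)
    (measure_mono hTA)
  have hμA0 : μ A ≠ 0 := by rw [hμA]; exact h0
  -- hull property: measurable subsets of `A` on which `a ≤ f` are null
  have hnull : ∀ M : Set α, MeasurableSet M → M ⊆ A → (∀ x ∈ M, a ≤ f x) → μ M = 0 := by
    intro M hM hMA hMf
    have hsub : T ⊆ toMeasurable μ T \ M := by
      intro x hx
      refine ⟨subset_toMeasurable μ T hx, fun hxM => ?_⟩
      exact absurd (hMf x hxM) (not_le.mpr hx.1)
    have hle : μ T ≤ μ (toMeasurable μ T) - μ M := by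
      rw [← measure_diff (hMA.trans inter_subset_left) hM.nullMeasurableSet (measure_ne_top μ M)]
      exact measure_mono hsub
    rw [measure_toMeasurable] at hle
    by_contra hM0
    exact absurd (hle.trans_lt (ENNReal.sub_lt_self (measure_ne_top μ T) h0 hM0))
      (lt_irrefl _)
  -- upper bound for the integral of f over A
  have hup : ∫⁻ x in A, f x ∂μ ≤ a * μ A := by
    rw [lintegral_def]
    refine iSup_le fun s => iSup_le fun hs => ?_
    rw [← SimpleFunc.lintegral_eq_lintegral]
    have hM0 : μ (A ∩ {x | a < s x}) = 0 := by
      refine hnull _ (hAm.inter (s.measurable measurableSet_Ioi)) inter_subset_left ?_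
      exact fun x hx => hx.2.le.trans (hs x)
    have hae : ∀ᵐ x ∂μ.restrict A, s x ≤ a := by
      rw [ae_restrict_iff' hAm, ae_iff]
      have : {x | ¬(x ∈ A → s x ≤ a)} = A ∩ {x | a < s x} := by
        ext x; simp [_root_.not_imp, not_le, and_comm]
      rw [this]
      exact hM0
    calc ∫⁻ x, s x ∂(μ.restrict A) ≤ ∫⁻ _x, a ∂(μ.restrict A) := lintegral_mono_ae hae
      _ = a * μ A := by rw [lintegral_const, Measure.restrict_apply_univ]
  -- lower bound for the integral of g over A
  have hlow : b * μ A ≤ ∫⁻ x in A, g x ∂μ := by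
    have : b * μ A = ∫⁻ _x in A, b ∂μ := by rw [setLIntegral_const]
    rw [this]
    refine lintegral_mono_ae ?_
    filter_upwards [ae_restrict_mem hAm] with x hx
    exact hx.2.le
  have hba : b * μ A ≤ a * μ A := by
    calc b * μ A ≤ ∫⁻ x in A, g x ∂μ := hlow
      _ = ∫⁻ x in A, f x ∂μ := (h A hAm).symm
      _ ≤ a * μ A := hup
  have : a * μ A < b * μ A := by
    rw [mul_comm a, mul_comm b]; exact ENNReal.mul_lt_mul_right hμA0 (measure_ne_top μ A) hab
  exact absurd (hba.trans_lt this) (lt_irrefl _)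

/-- If a (possibly non-measurable) family of probability measures has the same lower
set-integrals as a Markov kernel, then for each fixed measurable set the two agree
outside a set of outer measure zero. -/
lemma aux_ne_null {α Y : Type*} [MeasurableSpace α] [MeasurableSpace Y]
    (μ : Measure α) [IsProbabilityMeasure μ]
    (κ : α → Measure Y) (hκ : ∀ x, IsProbabilityMeasure (κ x))
    (k : ProbabilityTheory.Kernel α Y) [IsMarkovKernel k]
    (C : Set Y) (hC : MeasurableSet C)
    (h : ∀ A : Set α, MeasurableSet A → ∀ D : Set Y, MeasurableSet D →
      ∫⁻ x in A, κ x D ∂μ = ∫⁻ x in A, k x D ∂μ) :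
    μ {x | κ x C ≠ k x C} = 0 := by
  have h1 : μ {x | κ x C < k x C} = 0 :=
    aux_lt_null μ (fun x => κ x C) (fun x => k x C) (k.measurable_coe hC)
      (fun A hA => h A hA C hC)
  have h2 : μ {x | κ x Cᶜ < k x Cᶜ} = 0 :=
    aux_lt_null μ (fun x => κ x Cᶜ) (fun x => k x Cᶜ) (k.measurable_coe hC.compl)
      (fun A hA => h A hA Cᶜ hC.compl)
  refine measure_mono_null ?_ (measure_union_null h1 h2)
  intro x hx
  rcases lt_or_gt_of_ne hx with hlt | hgt
  · exact Or.inl hlt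
  · refine Or.inr ?_
    haveI := hκ x
    by_contra hcon
    rw [mem_setOf_eq, not_lt] at hcon
    have e1 : κ x C + κ x Cᶜ = 1 := prob_add_prob_compl hC
    have e2 : k x C + k x Cᶜ = 1 := prob_add_prob_compl hC
    have : (1 : ℝ≥0∞) < 1 := by
      calc (1 : ℝ≥0∞) = k x Cᶜ + k x C := by rw [add_comm]; exact e2.symm
        _ < κ x Cᶜ + κ x C :=
          ENNReal.add_lt_add_of_le_of_lt (measure_ne_top _ _) hcon hgt
        _ = 1 := by rw [add_comm]; exact e1
    exact absurd this (lt_irrefl _)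

/-- If a coupling π of (μ, ν), with disintegration π = μ(dx) ⊗ κ_x(dy), is not
absolutely continuous with respect to μ ⊗ ν, then the set of pairs (x₁, x₂) for which
there exist Borel sets U₁, U₂ with κ_{x_i}(U_i) > 0 and κ_{x_i}(U_{i+1}) = 0
(indices mod 2) has positive μ ⊗ μ measure. -/
theorem singular_part_gives_incompatible_sections
    {X Y : Type*} [MetricSpace X] [TopologicalSpace.SeparableSpace X] [CompleteSpace X]
    [MeasurableSpace X] [BorelSpace X]
    [MetricSpace Y] [TopologicalSpace.SeparableSpace Y] [CompleteSpace Y]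
    [MeasurableSpace Y] [BorelSpace Y]
    (μ : Measure X) [IsProbabilityMeasure μ] (ν : Measure Y) [IsProbabilityMeasure ν]
    (π : Measure (X × Y)) [IsProbabilityMeasure π]
    (hπ₁ : π.map Prod.fst = μ) (hπ₂ : π.map Prod.snd = ν)
    (κ : X → Measure Y) (hκ : ∀ x, IsProbabilityMeasure (κ x))
    (hdisint : ∀ (A : Set X) (C : Set Y), MeasurableSet A → MeasurableSet C →
      π (A ×ˢ C) = ∫⁻ x in A, κ x C ∂μ)
    (hsing : ¬ π ≪ μ.prod ν) :
    0 < (μ.prod μ) {p : X × X |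
      ∃ U₁ U₂ : Set Y, MeasurableSet U₁ ∧ MeasurableSet U₂ ∧
        0 < κ p.1 U₁ ∧ 0 < κ p.2 U₂ ∧ κ p.1 U₂ = 0 ∧ κ p.2 U₁ = 0} := by
  haveI hYne : Nonempty Y := by
    by_contra hY
    rw [not_nonempty_iff] at hY
    have h1 : ν univ = 1 := measure_univ
    rw [Set.univ_eq_empty_iff.mpr hY, measure_empty] at h1
    exact zero_ne_one h1
  set k := π.condKernel with hk_def
  have hfst : π.fst = μ := hπ₁
  have hcomp : μ ⊗ₘ k = π := by rw [← hfst]; exact π.disintegrate π.condKernel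
  -- rectangle formula for the kernel
  have hkrect : ∀ (A : Set X) (C : Set Y), MeasurableSet A → MeasurableSet C →
      ∫⁻ x in A, k x C ∂μ = π (A ×ˢ C) := by
    intro A C hA hC
    rw [← hcomp, Measure.compProd_apply_prod hA hC]
  -- both set-integrals agree
  have hboth : ∀ A : Set X, MeasurableSet A → ∀ D : Set Y, MeasurableSet D →
      ∫⁻ x in A, κ x D ∂μ = ∫⁻ x in A, k x D ∂μ := by
    intro A hA D hD
    rw [← hdisint A D hA hD]
    exact (hkrect A D hA hD).symm
  -- countable generating π-system of Y
  set e : ℕ → Set Y := natGeneratingSequence Y with he_def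
  have he_meas : ∀ n, MeasurableSet (e n) := fun n => measurableSet_natGeneratingSequence n
  set Psys : Set (Set Y) := range (fun F : Finset ℕ => ⋂ i ∈ F, e i) with hPsys_def
  have hPc : Psys.Countable := countable_range _
  have hPmeas : ∀ C ∈ Psys, MeasurableSet C := by
    rintro C ⟨F, rfl⟩
    exact Finset.measurableSet_biInter F (fun i _ => he_meas i)
  have hPpi : IsPiSystem Psys := by
    rintro s ⟨F, rfl⟩ t ⟨G, rfl⟩ _
    refine ⟨F ∪ G, ?_⟩
    ext x
    simp only [mem_iInter, Finset.mem_union, mem_inter_iff]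
    constructor
    · intro hx
      exact ⟨fun  i hi => hx i (Or.inl hi), fun i hi => hx i (Or.inr hi)⟩
    · rintro ⟨h1, h2⟩ i (hi | hi)
      · exact h1 i hi
      · exact h2 i hi
  have hPgen : (inferInstance : MeasurableSpace Y) = generateFrom Psys := by
    refine le_antisymm ?_ (generateFrom_le hPmeas)
    rw [← generateFrom_natGeneratingSequence Y]
    refine generateFrom_le fun s hs => ?_
    obtain ⟨n, rfl⟩ := hs
    refine measurableSet_generateFrom ⟨({n} : Finset ℕ), ?_⟩
    simp [he_def]
  -- the null set off which κ agrees with the kernel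
  set N : Set X := ⋃ C ∈ Psys, {x | κ x C ≠ k x C} with hN_def
  have hNnull : μ N = 0 :=
    (measure_biUnion_null_iff hPc).mpr
      (fun C hCP => aux_ne_null μ κ hκ k C (hPmeas C hCP) hboth)
  have hagree : ∀ x ∉ N, κ x = k x := by
    intro x hx
    haveI := hκ x
    refine ext_of_generate_finite Psys hPgen hPpi (fun s hs => ?_) ?_
    · by_contra hne
      exact hx (mem_biUnion hs hne)
    · rw [measure_univ, measure_univ]
  -- the singular set W
  have hσ : π.singularPart (μ.prod ν) ≠ 0 := by
    rw [Ne, Measure.singularPart_eq_zero]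
    exact hsing
  obtain ⟨s, hs, hσs, hρs⟩ := π.mutuallySingular_singularPart (μ.prod ν)
  set W := sᶜ with hW_def
  have hW : MeasurableSet W := hs.compl
  have hWnull : (μ.prod ν) W = 0 := hρs
  have hπW : 0 < π W := by
    have h1 : π.singularPart (μ.prod ν) W = π.singularPart (μ.prod ν) univ := by
      rw [hW_def, measure_compl hs (measure_ne_top _ s), hσs, tsub_zero]
    have h2 : 0 < π.singularPart (μ.prod ν) univ := by
      rw [pos_iff_ne_zero]
      intro hc
      exact hσ (Measure.measure_univ_eq_zero.mp hc)
    calc 0 < π.singularPart (μ.prod ν) W := h1 ▸ h2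
      _ ≤ π W := Measure.singularPart_le π (μ.prod ν) W
  have hWsec : ∀ x : X, MeasurableSet (Prod.mk x ⁻¹' W) := fun x => measurable_prodMk_left hW
  -- the positive-mass set P1
  have mP1fun : Measurable fun x => k x (Prod.mk x ⁻¹' W) :=
    Kernel.measurable_kernel_prodMk_left (κ := k) hW
  set P1 : Set X := {x | 0 < k x (Prod.mk x ⁻¹' W)} with hP1_def
  have hP1m : MeasurableSet P1 := mP1fun measurableSet_Ioi
  have hintW : ∫⁻ x, k x (Prod.mk x ⁻¹' W) ∂μ = π W := by
    have h1 := Measure.lintegral_condKernel_mem (ρ := π) hW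
    rw [hfst] at h1
    exact h1
  have hμP1 : 0 < μ P1 := by
    rw [pos_iff_ne_zero]
    intro h0
    have hae : ∀ᵐ x ∂μ, k x (Prod.mk x ⁻¹' W) = 0 := by
      rw [ae_iff]
      have : {x | ¬ k x (Prod.mk x ⁻¹' W) = 0} = P1 := by
        ext x
        simp [hP1_def, pos_iff_ne_zero]
      rw [this]
      exact h0
    have : ∫⁻ x, k x (Prod.mk x ⁻¹' W) ∂μ = 0 := lintegral_eq_zero_iff mP1fun |>.mpr hae
    rw [hintW] at this
    exact hπW.ne' this
  -- sections of W are ν-null almost everywhere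
  have hνsec : ∀ᵐ x ∂μ, ν (Prod.mk x ⁻¹' W) = 0 := by
    have h1 := (Measure.measure_prod_null hW).mp hWnull
    filter_upwards [h1] with x hx using hx
  -- kernel vanishes a.e. on ν-null sets
  have hker0 : ∀ C : Set Y, MeasurableSet C → ν C = 0 → μ {x | k x C ≠ 0} = 0 := by
    intro C hC hνC
    have hint : ∫⁻ x, k x C ∂μ = 0 := by
      have h1 : ∫⁻ x, k x C ∂μ = π (univ ×ˢ C) := by
        have h2 := hkrect univ C MeasurableSet.univ hC
        rwa [Measure.restrict_univ] at h2
      have h2 : π (univ ×ˢ C) = ν C := by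
        rw [← hπ₂, Measure.map_apply measurable_snd hC]
        congr 1
        ext p
        simp
      rw [h1, h2, hνC]
    have hae := (lintegral_eq_zero_iff (k.measurable_coe hC)).mp hint
    rw [Filter.EventuallyEq, ae_iff] at hae
    exact hae
  -- bad set B : κ_{x₁} charges W_{x₂}
  have hWB' : MeasurableSet {q : (X × X) × Y | (q.1.2, q.2) ∈ W} :=
    (measurable_fst.snd.prodMk measurable_snd) hW
  have mfB : Measurable fun p : X × X => k p.1 (Prod.mk p.2 ⁻¹' W) := by
    have h1 := Kernel.measurable_kernel_prodMk_left (κ := k.comap Prod.fst measurable_fst) hWB'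
    simp [Kernel.comap_apply] at h1
    exact h1
  set B : Set (X × X) := {p | 0 < k p.1 (Prod.mk p.2 ⁻¹' W)} with hB_def
  have hBm : MeasurableSet B := mfB measurableSet_Ioi
  have hBnull : (μ.prod μ) B = 0 := by
    have hsec0 : (fun y => μ ((fun x => (x, y)) ⁻¹' B)) =ᵐ[μ] fun _ => 0 := by
      filter_upwards [hνsec] with y hy
      refine measure_mono_null ?_ (hker0 _ (hWsec y) hy)
      intro x hx
      exact hx.ne'
    calc (μ.prod μ) B = ∫⁻ y, μ ((fun x => (x, y)) ⁻¹' B) ∂μ := Measure.prod_apply_symm hBm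
      _ = ∫⁻ _y, (0 : ℝ≥0∞) ∂μ := lintegral_congr_ae hsec0
      _ = 0 := lintegral_zero
  -- bad set B' : κ_{x₂} charges W_{x₁}
  have hWB'' : MeasurableSet {q : (X × X) × Y | (q.1.1, q.2) ∈ W} :=
    (measurable_fst.fst.prodMk measurable_snd) hW
  have mfB' : Measurable fun p : X × X => k p.2 (Prod.mk p.1 ⁻¹' W) := by
    have h1 := Kernel.measurable_kernel_prodMk_left (κ := k.comap Prod.snd measurable_snd) hWB''
    simp [Kernel.comap_apply] at h1
    exact h1
  set B' : Set (X × X) := {p | 0 < k p.2 (Prod.mk p.1 ⁻¹' W)} with hB'_def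
  have hB'm : MeasurableSet B' := mfB' measurableSet_Ioi
  have hB'null : (μ.prod μ) B' = 0 := by
    have hsec0 : (fun x => μ (Prod.mk x ⁻¹' B')) =ᵐ[μ] fun _ => 0 := by
      filter_upwards [hνsec] with x hx
      refine measure_mono_null ?_ (hker0 _ (hWsec x) hx)
      intro y hy
      exact hy.ne'
    calc (μ.prod μ) B' = ∫⁻ x, μ (Prod.mk x ⁻¹' B') ∂μ := Measure.prod_apply hB'm
      _ = ∫⁻ _x, (0 : ℝ≥0∞) ∂μ := lintegral_congr_ae hsec0
      _ = 0 := lintegral_zero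
  -- the bad set
  set Bad : Set (X × X) := B ∪ B' ∪ (N ×ˢ (univ : Set X)) ∪ ((univ : Set X) ×ˢ N) with hBad_def
  have hBadnull : (μ.prod μ) Bad = 0 := by
    refine measure_union_null (measure_union_null (measure_union_null hBnull hB'null) ?_) ?_
    · refine measure_mono_null (fun p hp => ?_) (?_ : (μ.prod μ) (N ×ˢ (univ : Set X)) = 0)
      · exact hp
      · rw [Measure.prod_prod, hNnull, zero_mul]
    · rw [Measure.prod_prod, hNnull, mul_zero]
  -- inclusion into the target set
  have hsub : (P1 ×ˢ P1) \ Bad ⊆ {p : X × X |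
      ∃ U₁ U₂ : Set Y, MeasurableSet U₁ ∧ MeasurableSet U₂ ∧
        0 < κ p.1 U₁ ∧ 0 < κ p.2 U₂ ∧ κ p.1 U₂ = 0 ∧ κ p.2 U₁ = 0} := by
    rintro ⟨x₁, x₂⟩ ⟨⟨hx₁, hx₂⟩, hnb⟩
    rw [hBad_def] at hnb
    simp only [mem_union, not_or] at hnb
    obtain ⟨⟨⟨hnB, hnB'⟩, hnN1⟩, hnN2⟩ := hnb
    have hx1N : x₁ ∉ N := fun h => hnN1 ⟨h, mem_univ _⟩
    have hx2N : x₂ ∉ N := fun h => hnN2 ⟨mem_univ _, h⟩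
    have e1 : κ x₁ = k x₁ := hagree _ hx1N
    have e2 : κ x₂ = k x₂ := hagree _ hx2N
    refine ⟨Prod.mk x₁ ⁻¹' W, Prod.mk x₂ ⁻¹' W, hWsec x₁, hWsec x₂, ?_, ?_, ?_, ?_⟩
    · rw [e1]; exact hx₁
    · rw [e2]; exact hx₂
    · rw [e1]
      have : ¬ 0 < k x₁ (Prod.mk x₂ ⁻¹' W) := hnB
      exact le_zero_iff.mp (not_lt.mp this)
    · rw [e2]
      have : ¬ 0 < k x₂ (Prod.mk x₁ ⁻¹' W) := hnB'
      exact le_zero_iff.mp (not_lt.mp this)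
  calc (0 : ℝ≥0∞) < μ P1 * μ P1 := ENNReal.mul_pos hμP1.ne' hμP1.ne'
    _ = (μ.prod μ) (P1 ×ˢ P1) := (Measure.prod_prod _ _).symm
    _ = (μ.prod μ) ((P1 ×ˢ P1) \ Bad) := (measure_diff_null hBadnull).symm
    _ ≤ _ := measure_mono hsub
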